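/- Let (A,B) be a nonempty, bounded, closed and convex pair in a reflexive and strictly convex Banach space X. If x₁, x₂ ∈ A₀ and u₁, u₂ ∈ B₀ satisfy ‖x₁−u₁‖ = dist(A,B) and ‖x₂−u₂‖ = dist(A,B), then for every t ∈ [0,1], ‖(t x₁ + (1−t) x₂) − (t u₁ + (1−t) u₂)‖ = dist(A,B); in particular the proximity projection P on A₀ ∪ B₀ is an affine mapping. -/
import Mathlib


open Set

/-- `setDist A B = inf {‖x - y‖ : x ∈ A, y ∈ B}`. -/
noncomputable def setDist {X : Type*} [NormedAddCommGroup X] (A B : Set X) : ℝ :=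
  sInf ((fun p : X × X => ‖p.1 - p.2‖) '' (A ×ˢ B))

/-- `A₀ = {x ∈ A : ‖x - y‖ = dist(A,B) for some y ∈ B}`. -/
noncomputable def proxA {X : Type*} [NormedAddCommGroup X] (A B : Set X) : Set X :=
  {x ∈ A | ∃ y ∈ B, ‖x - y‖ = setDist A B}

/-- `B₀ = {y ∈ B : ‖x - y‖ = dist(A,B) for some x ∈ A}`. -/
noncomputable def proxB {X : Type*} [NormedAddCommGroup X] (A B : Set X) : Set X :=
  {y ∈ B | ∃ x ∈ A, ‖x - y‖ = setDist A B}

/-- The proximity projection on `A₀ ∪ B₀` is affine: convex combinations of proximal pairs are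
again at distance `dist(A,B)`. -/
theorem proximity_projection_affine
    {X : Type*} [NormedAddCommGroup X] [NormedSpace ℝ X] [CompleteSpace X]
    [StrictConvexSpace ℝ X]
    (hrefl : Function.Surjective (NormedSpace.inclusionInDoubleDual ℝ X))
    (A B : Set X) (hA : A.Nonempty) (hB : B.Nonempty)
    (hAbd : Bornology.IsBounded A) (hBbd : Bornology.IsBounded B)
    (hAcl : IsClosed A) (hBcl : IsClosed B)
    (hAconv : Convex ℝ A) (hBconv : Convex ℝ B)
    (x₁ x₂ u₁ u₂ : X) (hx₁ : x₁ ∈ proxA A B) (hx₂ : x₂ ∈ proxA A B)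
    (hu₁ : u₁ ∈ proxB A B) (hu₂ : u₂ ∈ proxB A B)
    (h₁ : ‖x₁ - u₁‖ = setDist A B) (h₂ : ‖x₂ - u₂‖ = setDist A B) :
    ∀ t : ℝ, t ∈ Set.Icc (0 : ℝ) 1 →
      ‖(t • x₁ + (1 - t) • x₂) - (t • u₁ + (1 - t) • u₂)‖ = setDist A B := by
  intro t ht
  obtain ⟨ht0, ht1⟩ := ht
  have ht1' : (0:ℝ) ≤ 1 - t := by linarith
  have haA : t • x₁ + (1 - t) • x₂ ∈ A := hAconv hx₁.1 hx₂.1 ht0 ht1' (by ring)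
  have hbB : t • u₁ + (1 - t) • u₂ ∈ B := hBconv hu₁.1 hu₂.1 ht0 ht1' (by ring)
  have hlow : setDist A B ≤ ‖(t • x₁ + (1 - t) • x₂) - (t • u₁ + (1 - t) • u₂)‖ := by
    apply csInf_le
    · exact ⟨0, fun r hr => by
        obtain ⟨p, _, rfl⟩ := hr; exact norm_nonneg _⟩
    · exact ⟨(t • x₁ + (1 - t) • x₂, t • u₁ + (1 - t) • u₂), ⟨haA, hbB⟩, rfl⟩
  have hhigh : ‖(t • x₁ + (1 - t) • x₂) - (t • u₁ + (1 - t) • u₂)‖ ≤ setDist A B := by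
    have heq : (t • x₁ + (1 - t) • x₂) - (t • u₁ + (1 - t) • u₂)
        = t • (x₁ - u₁) + (1 - t) • (x₂ - u₂) := by
      simp only [smul_sub]; abel
    calc ‖(t • x₁ + (1 - t) • x₂) - (t • u₁ + (1 - t) • u₂)‖
        = ‖t • (x₁ - u₁) + (1 - t) • (x₂ - u₂)‖ := by rw [heq]
      _ ≤ ‖t • (x₁ - u₁)‖ + ‖(1 - t) • (x₂ - u₂)‖ := norm_add_le _ _
      _ = t * ‖x₁ - u₁‖ + (1 - t) * ‖x₂ - u₂‖ := by
          rw [norm_smul, norm_smul, Real.norm_of_nonneg ht0, Real.norm_of_nonneg ht1']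
      _ = setDist A B := by rw [h₁, h₂]; ring
  linarith
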